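/- Joint-error transfer lemma (key step of Theorem 4): for any source domain S and target domain T over X×Y, any q > 1, and any probability measure ρ on H, e_T(ρ) ≤ β_q · [e_S(ρ)]^{1−1/q} + η_{T∖S}. -/

import Mathlib

open MeasureTheory Real
open scoped ENNReal

noncomputable section

/-- The 0-1 loss on labels in `{−1,+1}`, encoded by `Bool` (`false ↦ −1`, `true ↦ +1`). -/
def l01 (a b : Bool) : ℝ := if a = b then 0 else 1

variable {X H : Type*} [MeasurableSpace X] [MeasurableSpace H]

/-- The expected joint error `e_P(ρ) = E_{(h,h')~ρ⊗ρ} E_{(x,y)~P} ℓ(h(x),y)·ℓ(h'(x),y)`. -/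
def jointErr (F : H → X → Bool) (P : Measure (X × Bool)) (ρ : Measure H) : ℝ :=
  ∫ p, ∫ z, l01 (F p.1 z.1) z.2 * l01 (F p.2 z.1) z.2 ∂P ∂(ρ.prod ρ)

/-- `β_q = (∫ (dT_A/dS)^q dS)^{1/q}`, where `T_A` is the absolutely continuous part of the
Lebesgue decomposition of `T` with respect to `S`, so that `dT_A/dS = T.rnDeriv S`. -/
def betaQ (S T : Measure (X × Bool)) (q : ℝ) : ℝ :=
  (∫ z, (T.rnDeriv S z).toReal ^ q ∂S) ^ (1 / q)

/-- `η_{T∖S} = sup_{h∈H} ∫ ℓ(h(x),y) dT_⊥(x,y)`, where `T_⊥ = T.singularPart S` is the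
part of `T` singular with respect to `S`. -/
def etaTS (F : H → X → Bool) (S T : Measure (X × Bool)) : ℝ :=
  ⨆ h : H, ∫ z, l01 (F h z.1) z.2 ∂(T.singularPart S)

namespace JET

def L (a b : Bool) : ℝ≥0∞ := if a = b then 0 else 1

lemma L_le_one (a b : Bool) : L a b ≤ 1 := by unfold L; split <;> simp

lemma ofReal_l01 (a b : Bool) : ENNReal.ofReal (l01 a b) = L a b := by
  unfold l01 L; split <;> simp

lemma l01_nonneg (a b : Bool) : 0 ≤ l01 a b := by unfold l01; split <;> norm_num

def gE {X H : Type*} (F : H → X → Bool) : (H × H) × (X × Bool) → ℝ≥0∞ :=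
  fun w => L (F w.1.1 w.2.1) w.2.2 * L (F w.1.2 w.2.1) w.2.2

omit [MeasurableSpace X] [MeasurableSpace H] in
lemma gE_le_one {F : H → X → Bool} (w : (H × H) × (X × Bool)) : gE F w ≤ 1 :=
  mul_le_one' (L_le_one _ _) (L_le_one _ _)

omit [MeasurableSpace X] [MeasurableSpace H] in
lemma gE_zero_or_one {F : H → X → Bool} (w : (H × H) × (X × Bool)) :
    gE F w = 0 ∨ gE F w = 1 := by
  unfold gE L; split <;> split <;> simp

lemma measurable_gE {F : H → X → Bool} (hF : Measurable (Function.uncurry F)) :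
    Measurable (gE F) := by
  have hL : Measurable fun bb : Bool × Bool => L bb.1 bb.2 := .of_discrete
  have h1 : Measurable fun w : (H × H) × (X × Bool) => F w.1.1 w.2.1 :=
    hF.comp ((measurable_fst.fst).prodMk (measurable_snd.fst))
  have h2 : Measurable fun w : (H × H) × (X × Bool) => F w.1.2 w.2.1 :=
    hF.comp ((measurable_fst.snd).prodMk (measurable_snd.fst))
  exact (hL.comp (h1.prodMk measurable_snd.snd)).mul
    (hL.comp (h2.prodMk measurable_snd.snd))

lemma integral_l01_eq {F : H → X → Bool} (hF : Measurable (Function.uncurry F)) (h : H)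
    (P : Measure (X × Bool)) [IsFiniteMeasure P] :
    ∫ z, l01 (F h z.1) z.2 ∂P = (∫⁻ z, L (F h z.1) z.2 ∂P).toReal := by
  have hl : Measurable fun bb : Bool × Bool => l01 bb.1 bb.2 := .of_discrete
  have hm : Measurable fun z : X × Bool => l01 (F h z.1) z.2 :=
    hl.comp ((hF.comp (measurable_const.prodMk measurable_fst)).prodMk measurable_snd)
  rw [integral_eq_lintegral_of_nonneg_ae (ae_of_all _ fun z => l01_nonneg _ _)
    hm.aestronglyMeasurable]
  simp_rw [ofReal_l01]

lemma lintegral_L_le {F : H → X → Bool} (h : H) (P : Measure (X × Bool)) :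
    ∫⁻ z, L (F h z.1) z.2 ∂P ≤ P Set.univ := by
  calc ∫⁻ z, L (F h z.1) z.2 ∂P ≤ ∫⁻ _, 1 ∂P := lintegral_mono fun z => L_le_one _ _
  _ = P Set.univ := by simp

lemma jointErr_eq {F : H → X → Bool} (hF : Measurable (Function.uncurry F))
    (P : Measure (X × Bool)) [IsFiniteMeasure P] (ρ : Measure H) [IsProbabilityMeasure ρ] :
    jointErr F P ρ = (∫⁻ p, ∫⁻ z, gE F (p, z) ∂P ∂(ρ.prod ρ)).toReal := by
  have hl : Measurable fun bb : Bool × Bool => l01 bb.1 bb.2 := .of_discrete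
  have hinner : ∀ p : H × H,
      ∫ z, l01 (F p.1 z.1) z.2 * l01 (F p.2 z.1) z.2 ∂P
        = (∫⁻ z, gE F (p, z) ∂P).toReal := by
    intro p
    have hm : Measurable fun z : X × Bool => l01 (F p.1 z.1) z.2 * l01 (F p.2 z.1) z.2 :=
      ((hl.comp ((hF.comp (measurable_const.prodMk measurable_fst)).prodMk
        measurable_snd))).mul
      ((hl.comp ((hF.comp (measurable_const.prodMk measurable_fst)).prodMk
        measurable_snd)))
    rw [integral_eq_lintegral_of_nonneg_ae
      (ae_of_all _ fun z => mul_nonneg (l01_nonneg _ _) (l01_nonneg _ _))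
      hm.aestronglyMeasurable]
    congr 1
    refine lintegral_congr fun z => ?_
    rw [ENNReal.ofReal_mul (l01_nonneg _ _), ofReal_l01, ofReal_l01]
    rfl
  unfold jointErr
  simp_rw [hinner]
  rw [integral_toReal]
  · exact ((measurable_gE hF).lintegral_prod_right').aemeasurable
  · refine ae_of_all _ fun p => ?_
    calc ∫⁻ z, gE F (p, z) ∂P ≤ ∫⁻ _, 1 ∂P := lintegral_mono fun z => gE_le_one _
    _ = P Set.univ := by simp
    _ < ⊤ := measure_lt_top _ _

end JET

/-- Joint-error transfer lemma (key step of Theorem 4): for any source domain `S` and target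
domain `T`, any `q > 1` (with `β_q` finite, i.e. `(dT_A/dS)^q` is `S`-integrable), and any
probability measure `ρ` on `H`, `e_T(ρ) ≤ β_q · [e_S(ρ)]^{1−1/q} + η_{T∖S}`. -/
theorem joint_error_transfer
    (F : H → X → Bool) (hF : Measurable (Function.uncurry F))
    (S T : Measure (X × Bool)) [IsProbabilityMeasure S] [IsProbabilityMeasure T]
    (q : ℝ) (hq : 1 < q)
    (hβ : Integrable (fun z => (T.rnDeriv S z).toReal ^ q) S)
    (ρ : Measure H) [IsProbabilityMeasure ρ] :
    jointErr F T ρ ≤ betaQ S T q * (jointErr F S ρ) ^ (1 - 1 / q) + etaTS F S T := by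
  classical
  obtain ⟨q', hq'⟩ : ∃ q', q.HolderConjugate q' :=
    ⟨_, Real.HolderConjugate.conjExponent hq⟩
  have hq0 : (0:ℝ) < q := hq'.pos
  have hinv : 1 / q' = 1 - 1 / q := by
    have := hq'.inv_add_inv_eq_one
    rw [one_div, one_div]; linarith
  set f : X × Bool → ℝ≥0∞ := T.rnDeriv S with hfdef
  have hfm : Measurable f := Measure.measurable_rnDeriv T S
  have hflt : ∀ᵐ z ∂S, f z < ⊤ := Measure.rnDeriv_lt_top T S
  set g := JET.gE F with hgdef
  have hgm : Measurable g := JET.measurable_gE hF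
  set ρ2 := ρ.prod ρ with hρ2
  set Tp := T.singularPart S with hTp
  -- eta facts
  have heta_bdd : BddAbove (Set.range fun h : H => ∫ z, l01 (F h z.1) z.2 ∂Tp) := by
    refine ⟨(Tp Set.univ).toReal, ?_⟩
    rintro x ⟨h, rfl⟩
    show ∫ z, l01 (F h z.1) z.2 ∂Tp ≤ _
    rw [JET.integral_l01_eq hF]
    exact ENNReal.toReal_mono (measure_ne_top _ _) (JET.lintegral_L_le h Tp)
  have heta_nonneg : 0 ≤ etaTS F S T :=
    Real.iSup_nonneg fun h => integral_nonneg fun z => JET.l01_nonneg _ _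
  -- decomposition
  have hdec : ∀ p : H × H, ∫⁻ z, g (p, z) ∂T
      = ∫⁻ z, g (p, z) ∂Tp + ∫⁻ z, f z * g (p, z) ∂S := by
    intro p
    have hgmp : Measurable fun z => g (p, z) := hgm.comp measurable_prodMk_left
    conv_lhs => rw [T.haveLebesgueDecomposition_add S]
    rw [lintegral_add_measure, lintegral_withDensity_eq_lintegral_mul _ hfm hgmp]
    rfl
  -- split A = A1 + A2
  set A1 := ∫⁻ p, ∫⁻ z, g (p, z) ∂Tp ∂ρ2 with hA1
  set A2 := ∫⁻ p, ∫⁻ z, f z * g (p, z) ∂S ∂ρ2 with hA2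
  have hsplit : ∫⁻ p, ∫⁻ z, g (p, z) ∂T ∂ρ2 = A1 + A2 := by
    simp_rw [hdec]
    exact lintegral_add_left hgm.lintegral_prod_right' _
  -- bound A1
  have hA1le : A1 ≤ ENNReal.ofReal (etaTS F S T) := by
    have key : ∀ p : H × H, ∫⁻ z, g (p, z) ∂Tp ≤ ENNReal.ofReal (etaTS F S T) := by
      intro p
      have h1 : ∫⁻ z, g (p, z) ∂Tp ≤ ∫⁻ z, JET.L (F p.1 z.1) z.2 ∂Tp :=
        lintegral_mono fun z => mul_le_of_le_one_right' (JET.L_le_one _ _)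
      have h2 : ∫⁻ z, JET.L (F p.1 z.1) z.2 ∂Tp
          = ENNReal.ofReal (∫ z, l01 (F p.1 z.1) z.2 ∂Tp) := by
        rw [JET.integral_l01_eq hF, ENNReal.ofReal_toReal]
        exact ((JET.lintegral_L_le p.1 Tp).trans_lt (measure_lt_top _ _)).ne
      refine h1.trans (h2.le.trans (ENNReal.ofReal_le_ofReal ?_))
      exact le_ciSup heta_bdd p.1
    calc A1 ≤ ∫⁻ _, ENNReal.ofReal (etaTS F S T) ∂ρ2 := lintegral_mono key
    _ = ENNReal.ofReal (etaTS F S T) := by simp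
  -- Hölder for A2
  set μ := ρ2.prod S with hμ
  have hfm2 : Measurable fun w : (H × H) × (X × Bool) => f w.2 := hfm.comp measurable_snd
  have hA2eq : A2 = ∫⁻ w, f w.2 * g w ∂μ := by
    rw [hμ, lintegral_prod (fun w => f w.2 * g w) ((hfm2.mul hgm).aemeasurable)]
  set B := ∫⁻ z, f z ^ q ∂S with hB
  set E := ∫⁻ w, g w ∂μ with hE
  have hBμ : ∫⁻ w, f w.2 ^ q ∂μ = B := by
    rw [hμ, lintegral_prod _ ((hfm2.pow measurable_const).aemeasurable)]
    simp [lintegral_const]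
    rfl
  have hgq : ∀ w, g w ^ q' = g w := by
    intro w
    rcases JET.gE_zero_or_one (F := F) w with h | h <;> rw [← hgdef] at h <;> rw [h]
    · exact ENNReal.zero_rpow_of_pos hq'.symm.pos
    · exact ENNReal.one_rpow _
  have hA2le : A2 ≤ B ^ (1/q) * E ^ (1 - 1/q) := by
    rw [hA2eq]
    calc ∫⁻ w, f w.2 * g w ∂μ
        ≤ (∫⁻ w, f w.2 ^ q ∂μ) ^ (1/q) * (∫⁻ w, g w ^ q' ∂μ) ^ (1/q') :=
          ENNReal.lintegral_mul_le_Lp_mul_Lq μ hq' hfm2.aemeasurable hgm.aemeasurable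
    _ = B ^ (1/q) * E ^ (1 - 1/q) := by
        simp_rw [hgq, hBμ, hinv]
        rfl
  -- finiteness
  have hBne : B ≠ ⊤ := by
    have hcongr : B = ∫⁻ z, ENNReal.ofReal ((f z).toReal ^ q) ∂S := by
      refine lintegral_congr_ae (hflt.mono fun z hz => ?_)
      show f z ^ q = ENNReal.ofReal ((f z).toReal ^ q)
      rw [← ENNReal.ofReal_rpow_of_nonneg ENNReal.toReal_nonneg hq0.le,
        ENNReal.ofReal_toReal hz.ne]
    rw [hcongr]
    exact ((hasFiniteIntegral_iff_ofReal
      (ae_of_all _ fun z => Real.rpow_nonneg ENNReal.toReal_nonneg q)).1 hβ.2).ne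
  have hEne : E ≠ ⊤ := by
    refine ((lintegral_mono fun w => JET.gE_le_one w).trans_lt ?_).ne
    simp
  -- betaQ and jointErr in ENNReal terms
  have hbeta : betaQ S T q = (B ^ (1/q)).toReal := by
    unfold betaQ
    rw [← hfdef, ← ENNReal.toReal_rpow]
    congr 1
    have : ∀ᵐ z ∂S, (f z).toReal ^ q = (f z ^ q).toReal :=
      ae_of_all _ fun z => ENNReal.toReal_rpow _ _
    rw [integral_congr_ae this, integral_toReal ((hfm.pow measurable_const).aemeasurable)
      (hflt.mono fun z hz => ENNReal.rpow_lt_top_of_nonneg hq0.le hz.ne)]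
  have hJS : jointErr F S ρ = E.toReal := by
    rw [JET.jointErr_eq hF S ρ, hE, hμ, lintegral_prod _ hgm.aemeasurable]
  have hJT : jointErr F T ρ = (∫⁻ p, ∫⁻ z, g (p, z) ∂T ∂ρ2).toReal :=
    JET.jointErr_eq hF T ρ
  -- combine
  have hfinal : ∫⁻ p, ∫⁻ z, g (p, z) ∂T ∂ρ2
      ≤ B ^ (1/q) * E ^ (1 - 1/q) + ENNReal.ofReal (etaTS F S T) := by
    rw [hsplit, add_comm A1 A2]
    exact add_le_add hA2le hA1le
  have hRne : B ^ (1/q) * E ^ (1 - 1/q) + ENNReal.ofReal (etaTS F S T) ≠ ⊤ := by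
    refine ENNReal.add_ne_top.2 ⟨ENNReal.mul_ne_top ?_ ?_, ENNReal.ofReal_ne_top⟩
    · exact ENNReal.rpow_ne_top_of_nonneg (by positivity) hBne
    · exact ENNReal.rpow_ne_top_of_nonneg (by rw [← hinv]; exact hq'.symm.one_div_nonneg) hEne
  calc jointErr F T ρ
      ≤ (B ^ (1/q) * E ^ (1 - 1/q) + ENNReal.ofReal (etaTS F S T)).toReal := by
        rw [hJT]; exact ENNReal.toReal_mono hRne hfinal
  _ = betaQ S T q * (jointErr F S ρ) ^ (1 - 1/q) + etaTS F S T := by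
      rw [ENNReal.toReal_add (ENNReal.add_ne_top.1 hRne).1 ENNReal.ofReal_ne_top,
        ENNReal.toReal_mul, ENNReal.toReal_ofReal heta_nonneg, hbeta, hJS,
        ENNReal.toReal_rpow]

end
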